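/- For every β ∈ (0, 1): (i) there is a unique nonnegative vector ψ* ∈ ℝᵏ with ψ*_{I*} = β and ψ*₁ + ⋯ + ψ*ₖ = 1 such that C_i(β, ψ*_i) = C_j(β, ψ*_j) for all i, j ≠ I*; and (ii) this ψ* is the unique maximizer of min_{i ≠ I*} C_i(β, ψ_i) over all nonnegative vectors ψ ∈ ℝᵏ with ψ_{I*} = β and ψ₁ + ⋯ + ψₖ = 1, so that min_{i ≠ I*} C_i(β, ψ*_i) = Γ*_β. -/

import Mathlib

/-- Kullback–Leibler divergence in a one-dimensional exponential family with
log-partition function `A`: `d(θ, x) = (θ - x)·A'(θ) - A(θ) + A(x)`. -/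
noncomputable def dKL (A : ℝ → ℝ) (θ x : ℝ) : ℝ := (θ - x) * deriv A θ - A θ + A x

/-- `C(β, ψ) = inf_{x ∈ ℝ} β·d(θ₁, x) + ψ·d(θ₂, x)`.  With `θ₁ = θ*_{I*}` and
`θ₂ = θ*_i`, this is the quantity `C_i(β, ψ)`. -/
noncomputable def Cfun (A : ℝ → ℝ) (θ₁ θ₂ β ψ : ℝ) : ℝ :=
  ⨅ x : ℝ, (β * dKL A θ₁ x + ψ * dKL A θ₂ x)

/-- `Γ*_β`: the supremum, over nonnegative vectors `ψ` with `ψ_{I*} = β` and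
`Σ ψ_i = 1`, of `min_{i ≠ I*} C_i(β, ψ_i)`. -/
noncomputable def Gamma (A : ℝ → ℝ) (k : ℕ) (θs : Fin k → ℝ) (Istar : Fin k) (β : ℝ) : ℝ :=
  sSup ((fun ψ : Fin k → ℝ =>
      ⨅ i : {i : Fin k // i ≠ Istar}, Cfun A (θs Istar) (θs i.1) β (ψ i.1)) ''
    {ψ : Fin k → ℝ | (∀ i, 0 ≤ ψ i) ∧ ψ Istar = β ∧ (∑ i, ψ i) = 1})

section basics
variable {A : ℝ → ℝ}

lemma derivA_strictMono (hA : Differentiable ℝ A)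
    (hconv : StrictConvexOn ℝ (Set.univ : Set ℝ) A) : StrictMono (deriv A) := by
  have h := hconv.strictMonoOn_deriv (fun x _ => hA.differentiableAt)
  intro a b hab
  exact h (Set.mem_univ a) (Set.mem_univ b) hab

lemma dKL_self (θ : ℝ) : dKL A θ θ = 0 := by simp [dKL]

lemma dKL_pos (hA : Differentiable ℝ A)
    (hconv : StrictConvexOn ℝ (Set.univ : Set ℝ) A) {θ x : ℝ} (hx : x ≠ θ) :
    0 < dKL A θ x := by
  rcases lt_or_gt_of_ne hx with h | h
  · have hs := hconv.slope_lt_deriv (Set.mem_univ x) (Set.mem_univ θ) h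
      hA.differentiableAt
    rw [slope_def_field] at hs
    have hθx : 0 < θ - x := by linarith
    rw [div_lt_iff₀ hθx] at hs
    unfold dKL; nlinarith
  · have hs := hconv.deriv_lt_slope (Set.mem_univ θ) (Set.mem_univ x) h
      hA.differentiableAt
    rw [slope_def_field] at hs
    have hθx : 0 < x - θ := by linarith
    rw [lt_div_iff₀ hθx] at hs
    unfold dKL; nlinarith

lemma dKL_nonneg (hA : Differentiable ℝ A)
    (hconv : StrictConvexOn ℝ (Set.univ : Set ℝ) A) (θ x : ℝ) : 0 ≤ dKL A θ x := by
  rcases eq_or_ne x θ with rfl | h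
  · simp [dKL]
  · exact (dKL_pos hA hconv h).le

lemma dKL_hasDerivAt (hA : Differentiable ℝ A) (θ x : ℝ) :
    HasDerivAt (fun y => dKL A θ y) (deriv A x - deriv A θ) x := by
  have h1 : HasDerivAt (fun y : ℝ => (θ - y) * deriv A θ) (-deriv A θ) x := by
    simpa using ((hasDerivAt_id x).const_sub θ).mul_const (deriv A θ)
  have h2 := (h1.sub_const (A θ)).add (hA x).hasDerivAt
  have : -deriv A θ + deriv A x = deriv A x - deriv A θ := by ring
  rw [this] at h2
  exact h2

lemma dKL_continuous (hA : Differentiable ℝ A) (θ : ℝ) :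
    Continuous (fun x => dKL A θ x) := by
  unfold dKL
  exact (((continuous_const.sub continuous_id).mul continuous_const).sub
    continuous_const).add hA.continuous

lemma dKL_mono_right (hA : Differentiable ℝ A)
    (hconv : StrictConvexOn ℝ (Set.univ : Set ℝ) A) {θ u x : ℝ}
    (hu : θ ≤ u) (hux : u ≤ x) : dKL A θ u ≤ dKL A θ x := by
  rcases eq_or_lt_of_le hux with rfl | hux
  · exact le_refl _
  · have hs := hconv.convexOn.deriv_le_slope (Set.mem_univ u) (Set.mem_univ x) hux
      hA.differentiableAt
    rw [slope_def_field, le_div_iff₀ (by linarith)] at hs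
    have hmono : deriv A θ ≤ deriv A u := (derivA_strictMono hA hconv).monotone hu
    unfold dKL; nlinarith

lemma dKL_mono_left (hA : Differentiable ℝ A)
    (hconv : StrictConvexOn ℝ (Set.univ : Set ℝ) A) {θ u x : ℝ}
    (hx : x ≤ u) (hu : u ≤ θ) : dKL A θ u ≤ dKL A θ x := by
  rcases eq_or_lt_of_le hx with rfl | hx
  · exact le_refl _
  · have hs := hconv.convexOn.slope_le_deriv (Set.mem_univ x) (Set.mem_univ u) hx
      hA.differentiableAt
    rw [slope_def_field, div_le_iff₀ (by linarith)] at hs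
    have hmono : deriv A u ≤ deriv A θ := (derivA_strictMono hA hconv).monotone hu
    unfold dKL; nlinarith

end basics

section cfun

variable {A : ℝ → ℝ} (hA : Differentiable ℝ A)
  (hconv : StrictConvexOn ℝ (Set.univ : Set ℝ) A) {θ₁ θ₂ β : ℝ}

include hA hconv

lemma phi_nonneg (hβ : 0 ≤ β) {ψ : ℝ} (hψ : 0 ≤ ψ) (x : ℝ) :
    0 ≤ β * dKL A θ₁ x + ψ * dKL A θ₂ x :=
  add_nonneg (mul_nonneg hβ (dKL_nonneg hA hconv _ _))
    (mul_nonneg hψ (dKL_nonneg hA hconv _ _))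

lemma Cfun_bddBelow (hβ : 0 ≤ β) {ψ : ℝ} (hψ : 0 ≤ ψ) :
    BddBelow (Set.range fun x => β * dKL A θ₁ x + ψ * dKL A θ₂ x) := by
  refine ⟨0, ?_⟩
  rintro _ ⟨x, rfl⟩
  exact phi_nonneg hA hconv hβ hψ x

lemma Cfun_le (hβ : 0 ≤ β) {ψ : ℝ} (hψ : 0 ≤ ψ) (x : ℝ) :
    Cfun A θ₁ θ₂ β ψ ≤ β * dKL A θ₁ x + ψ * dKL A θ₂ x :=
  ciInf_le (Cfun_bddBelow hA hconv hβ hψ) x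

lemma Cfun_nonneg (hβ : 0 ≤ β) {ψ : ℝ} (hψ : 0 ≤ ψ) : 0 ≤ Cfun A θ₁ θ₂ β ψ :=
  le_ciInf (phi_nonneg hA hconv hβ hψ)

lemma Cfun_zero (hβ : 0 ≤ β) : Cfun A θ₁ θ₂ β 0 = 0 := by
  refine le_antisymm ?_ (Cfun_nonneg hA hconv hβ le_rfl)
  have := Cfun_le hA hconv (θ₁ := θ₁) (θ₂ := θ₂) hβ (le_refl (0:ℝ)) θ₁
  simpa [dKL_self] using this

lemma Cfun_mono (hβ : 0 ≤ β) {a b : ℝ} (ha : 0 ≤ a) (hab : a ≤ b) :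
    Cfun A θ₁ θ₂ β a ≤ Cfun A θ₁ θ₂ β b := by
  refine le_ciInf fun x => ?_
  refine (Cfun_le hA hconv hβ ha x).trans ?_
  have := dKL_nonneg hA hconv θ₂ x
  nlinarith

lemma Cfun_le_D (hβ : 0 ≤ β) {ψ : ℝ} (hψ : 0 ≤ ψ) :
    Cfun A θ₁ θ₂ β ψ ≤ β * dKL A θ₁ θ₂ := by
  have := Cfun_le hA hconv (θ₁ := θ₁) (θ₂ := θ₂) hβ hψ θ₂
  simpa [dKL_self] using this

omit hA hconv in
lemma Cfun_exists_near {ψ : ℝ} {δ : ℝ} (hδ : 0 < δ) :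
    ∃ x, β * dKL A θ₁ x + ψ * dKL A θ₂ x < Cfun A θ₁ θ₂ β ψ + δ := by
  apply exists_lt_of_ciInf_lt (f := fun x => β * dKL A θ₁ x + ψ * dKL A θ₂ x)
  show Cfun A θ₁ θ₂ β ψ < _
  linarith

lemma Cfun_lt_D (hβ : 0 < β) (h21 : θ₂ < θ₁) {ψ : ℝ} (hψ : 0 ≤ ψ) :
    Cfun A θ₁ θ₂ β ψ < β * dKL A θ₁ θ₂ := by
  set g := fun x => β * dKL A θ₁ x + ψ * dKL A θ₂ x with hg
  have hm : β * (deriv A θ₂ - deriv A θ₁) < 0 := by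
    have := derivA_strictMono hA hconv h21
    nlinarith
  have hd : HasDerivAt g (β * (deriv A θ₂ - deriv A θ₁)) θ₂ := by
    have h1 := (dKL_hasDerivAt hA θ₁ θ₂).const_mul β
    have h2 := (dKL_hasDerivAt hA θ₂ θ₂).const_mul ψ
    have := h1.add h2
    simp only [sub_self, mul_zero, add_zero] at this
    exact this
  have hslope := hasDerivAt_iff_tendsto_slope.1 hd
  have hev : ∀ᶠ t in nhdsWithin θ₂ {θ₂}ᶜ, slope g θ₂ t < 0 :=
    hslope.eventually_lt_const hm
  have hev2 : ∀ᶠ t in nhdsWithin θ₂ (Set.Ioi θ₂), slope g θ₂ t < 0 :=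
    hev.filter_mono (nhdsWithin_mono _ (fun t ht => ne_of_gt ht))
  have hev3 : ∀ᶠ t in nhdsWithin θ₂ (Set.Ioi θ₂), θ₂ < t := self_mem_nhdsWithin
  obtain ⟨t, ht1, ht2⟩ := (hev2.and hev3).exists
  rw [slope_def_field, div_neg_iff] at ht1
  have hgt : g t < g θ₂ := by
    rcases ht1 with ⟨_, h⟩ | ⟨h, _⟩
    · linarith
    · linarith
  have : Cfun A θ₁ θ₂ β ψ ≤ g t := Cfun_le hA hconv hβ.le hψ t
  have hgθ₂ : g θ₂ = β * dKL A θ₁ θ₂ := by simp [hg, dKL_self]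
  linarith

end cfun

section cfun2
variable {A : ℝ → ℝ} (hA : Differentiable ℝ A)
  (hconv : StrictConvexOn ℝ (Set.univ : Set ℝ) A) {θ₁ θ₂ β : ℝ}
include hA hconv

lemma Cfun_strictMono (hβ : 0 < β) (h21 : θ₂ < θ₁) {a b : ℝ} (ha : 0 ≤ a) (hab : a < b) :
    Cfun A θ₁ θ₂ β a < Cfun A θ₁ θ₂ β b := by
  by_contra hle
  push_neg at hle
  have hb : (0:ℝ) ≤ b := le_trans ha hab.le
  have hbD : Cfun A θ₁ θ₂ β b < β * dKL A θ₁ θ₂ := Cfun_lt_D hA hconv hβ h21 hb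
  have hge : β * dKL A θ₁ θ₂ ≤ Cfun A θ₁ θ₂ β b := by
    apply le_of_forall_pos_le_add
    intro ε hε
    set D := dKL A θ₁ θ₂ with hD
    set ε₁ := ε / (2 * β) with hε₁def
    have hε₁ : 0 < ε₁ := by positivity
    -- continuity of d₁ at θ₂
    have hc : ContinuousAt (fun x => dKL A θ₁ x) θ₂ := (dKL_continuous hA θ₁).continuousAt
    rw [Metric.continuousAt_iff] at hc
    obtain ⟨r, hr, hball⟩ := hc ε₁ hε₁
    -- level set bound
    set η := min (dKL A θ₂ (θ₂ - r)) (dKL A θ₂ (θ₂ + r)) with hηdef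
    have hη : 0 < η := by
      apply lt_min
      · exact dKL_pos hA hconv (by linarith)
      · exact dKL_pos hA hconv (by linarith)
    have hlevel : ∀ x, dKL A θ₂ x < η → |x - θ₂| < r := by
      intro x hx
      by_contra hcon
      push_neg at hcon
      rcases le_abs.1 hcon with h | h
      · have : θ₂ + r ≤ x := by linarith
        have := dKL_mono_right hA hconv (by linarith : θ₂ ≤ θ₂ + r) this
        have : η ≤ dKL A θ₂ x := le_trans (min_le_right _ _) this
        linarith
      · have hxle : x ≤ θ₂ - r := by linarith
        have := dKL_mono_left hA hconv hxle (by linarith : θ₂ - r ≤ θ₂)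
        have : η ≤ dKL A θ₂ x := le_trans (min_le_left _ _) this
        linarith
    set δ := min ((b - a) * η) (ε / 2) with hδdef
    have hδ : 0 < δ := lt_min (by nlinarith) (by linarith)
    obtain ⟨x, hx⟩ := Cfun_exists_near (A := A) (θ₁ := θ₁) (θ₂ := θ₂) (β := β) (ψ := b) hδ
    have h1 : Cfun A θ₁ θ₂ β a ≤ β * dKL A θ₁ x + a * dKL A θ₂ x := Cfun_le hA hconv hβ.le ha x
    have hd2 : (b - a) * dKL A θ₂ x < δ := by linarith
    have hd2' : dKL A θ₂ x < η := by
      have h3 : δ ≤ (b - a) * η := min_le_left _ _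
      nlinarith
    have hxr : |x - θ₂| < r := hlevel x hd2'
    have hnear : |dKL A θ₁ x - D| < ε₁ := by
      have := hball (by simpa [Real.dist_eq] using hxr)
      simpa [Real.dist_eq, dKL_self] using this
    have hd1 : D - ε₁ < dKL A θ₁ x := by
      have := abs_lt.1 hnear
      linarith [this.1]
    have hφ : β * dKL A θ₁ x ≤ β * dKL A θ₁ x + b * dKL A θ₂ x := by
      nlinarith [dKL_nonneg hA hconv θ₂ x]
    have hβε : β * ε₁ = ε / 2 := by
      rw [hε₁def]; field_simp
    have hδε : δ ≤ ε / 2 := min_le_right _ _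
    nlinarith
  linarith

lemma Cfun_diff_le (hβ : 0 ≤ β) {a b : ℝ} (ha : 0 < a) (hab : a ≤ b) :
    a * Cfun A θ₁ θ₂ β b ≤ a * Cfun A θ₁ θ₂ β a + (b - a) * (β * dKL A θ₁ θ₂) := by
  have hb : 0 < b := lt_of_lt_of_le ha hab
  have key : ∀ ε > 0, a * Cfun A θ₁ θ₂ β b ≤
      (a * Cfun A θ₁ θ₂ β a + (b - a) * (β * dKL A θ₁ θ₂)) + ε := by
    intro ε hε
    set δ := ε / b with hδdef
    have hδ : 0 < δ := by positivity
    obtain ⟨x, hx⟩ := Cfun_exists_near (A := A) (θ₁ := θ₁) (θ₂ := θ₂) (β := β) (ψ := a) hδ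
    have hd2 : a * dKL A θ₂ x ≤ Cfun A θ₁ θ₂ β a + δ := by
      nlinarith [mul_nonneg hβ (dKL_nonneg hA hconv θ₁ x)]
    have hCb : Cfun A θ₁ θ₂ β b ≤ β * dKL A θ₁ x + b * dKL A θ₂ x :=
      Cfun_le hA hconv hβ hb.le x
    have hCaD : Cfun A θ₁ θ₂ β a ≤ β * dKL A θ₁ θ₂ := Cfun_le_D hA hconv hβ ha.le
    have hδb : δ * b = ε := by rw [hδdef]; field_simp
    -- a * Cb ≤ a*(β d₁x + a d₂x) + a(b-a) d₂x ≤ a(Ca + δ) + (b-a)(Ca+δ)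
    nlinarith [dKL_nonneg hA hconv θ₂ x, mul_nonneg hβ (dKL_nonneg hA hconv θ₁ x),
      mul_le_mul_of_nonneg_left hx.le ha.le,
      mul_le_mul_of_nonneg_left hd2 (by linarith : (0:ℝ) ≤ b - a)]
  by_contra hcon
  push_neg at hcon
  obtain ⟨ε, hε, hlt⟩ : ∃ ε > 0, (a * Cfun A θ₁ θ₂ β a + (b - a) * (β * dKL A θ₁ θ₂)) + ε <
      a * Cfun A θ₁ θ₂ β b :=
    ⟨(a * Cfun A θ₁ θ₂ β b - (a * Cfun A θ₁ θ₂ β a + (b - a) * (β * dKL A θ₁ θ₂))) / 2,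
      by linarith, by linarith⟩
  linarith [key ε hε]

lemma Cfun_continuousAt (hβ : 0 ≤ β) {a : ℝ} (ha : 0 < a) :
    ContinuousAt (fun ψ => Cfun A θ₁ θ₂ β ψ) a := by
  rw [Metric.continuousAt_iff]
  intro ε hε
  set M := β * dKL A θ₁ θ₂ with hM
  have hM0 : 0 ≤ M := mul_nonneg hβ (dKL_nonneg hA hconv _ _)
  refine ⟨min (a / 2) (ε * a / (8 * M + 4)), lt_min (by linarith) (by positivity), ?_⟩
  intro b hb
  rw [Real.dist_eq] at hb ⊢
  have hb1 : |b - a| < a / 2 := lt_of_lt_of_le hb (min_le_left _ _)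
  have hb2 : |b - a| < ε * a / (8 * M + 4) := lt_of_lt_of_le hb (min_le_right _ _)
  have hbpos : a / 2 < b := by
    have := abs_lt.1 hb1
    linarith [this.1]
  rcases le_total a b with hab | hba
  · have h0 : 0 ≤ Cfun A θ₁ θ₂ β b - Cfun A θ₁ θ₂ β a := by
      linarith [Cfun_mono hA hconv (θ₁ := θ₁) (θ₂ := θ₂) hβ ha.le hab]
    have h1 := Cfun_diff_le hA hconv (θ₁ := θ₁) (θ₂ := θ₂) hβ ha hab
    have hba0 : (0:ℝ) ≤ b - a := by linarith
    have hba' : b - a < ε * a / (8 * M + 4) := by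
      have := abs_lt.1 hb2; linarith [this.2]
    have h2 : (b - a) * (8 * M + 4) < ε * a := (lt_div_iff₀ (by positivity)).1 hba'
    have key1 : a * (Cfun A θ₁ θ₂ β b - Cfun A θ₁ θ₂ β a) ≤ (b - a) * M := by nlinarith [h1]
    have key2 : 2 * ((b - a) * M) < ε * a := by
      nlinarith [mul_nonneg hba0 (show (0:ℝ) ≤ 6 * M + 4 by linarith)]
    have key3 : Cfun A θ₁ θ₂ β b - Cfun A θ₁ θ₂ β a < ε := by
      nlinarith [mul_pos ha hε]
    rw [abs_lt]
    exact ⟨by linarith, key3⟩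
  · have h0 : 0 ≤ Cfun A θ₁ θ₂ β a - Cfun A θ₁ θ₂ β b := by
      linarith [Cfun_mono hA hconv (θ₁ := θ₁) (θ₂ := θ₂) hβ (by linarith : (0:ℝ) ≤ b) hba]
    have h1 := Cfun_diff_le hA hconv (θ₁ := θ₁) (θ₂ := θ₂) hβ (by linarith : (0:ℝ) < b) hba
    have hab0 : (0:ℝ) ≤ a - b := by linarith
    have hba' : a - b < ε * a / (8 * M + 4) := by
      rw [abs_sub_comm] at hb2; linarith [(abs_lt.1 hb2).2]
    have h2 : (a - b) * (8 * M + 4) < ε * a := (lt_div_iff₀ (by positivity)).1 hba'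
    have key1 : b * (Cfun A θ₁ θ₂ β a - Cfun A θ₁ θ₂ β b) ≤ (a - b) * M := by nlinarith [h1]
    have key2 : 2 * ((a - b) * M) < ε * a := by
      nlinarith [mul_nonneg hab0 (show (0:ℝ) ≤ 6 * M + 4 by linarith)]
    have key4 : a * (Cfun A θ₁ θ₂ β a - Cfun A θ₁ θ₂ β b) ≤
        2 * (b * (Cfun A θ₁ θ₂ β a - Cfun A θ₁ θ₂ β b)) := by nlinarith [h0, hbpos]
    have key3 : Cfun A θ₁ θ₂ β a - Cfun A θ₁ θ₂ β b < ε := by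
      nlinarith [mul_pos ha hε]
    rw [abs_lt]
    exact ⟨by linarith, by linarith⟩

lemma Cfun_continuousOn (hβ : 0 ≤ β) :
    ContinuousOn (fun ψ => Cfun A θ₁ θ₂ β ψ) (Set.Ici 0) := by
  intro a ha
  rcases eq_or_lt_of_le (Set.mem_Ici.1 ha) with rfl | hpos
  · -- at zero: squeeze
    have hC : Cfun A θ₁ θ₂ β 0 = 0 := Cfun_zero hA hconv hβ
    rw [ContinuousWithinAt, hC]
    have hup : ∀ ψ ∈ Set.Ici (0:ℝ), Cfun A θ₁ θ₂ β ψ ≤ ψ * dKL A θ₂ θ₁ := by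
      intro ψ hψ
      have := Cfun_le hA hconv (θ₁ := θ₁) (θ₂ := θ₂) hβ (Set.mem_Ici.1 hψ) θ₁
      simpa [dKL_self] using this
    have hlo : ∀ ψ ∈ Set.Ici (0:ℝ), (0:ℝ) ≤ Cfun A θ₁ θ₂ β ψ := fun ψ hψ =>
      Cfun_nonneg hA hconv hβ (Set.mem_Ici.1 hψ)
    have htop : Filter.Tendsto (fun ψ : ℝ => ψ * dKL A θ₂ θ₁) (nhdsWithin 0 (Set.Ici 0))
        (nhds 0) := by
      have : Filter.Tendsto (fun ψ : ℝ => ψ * dKL A θ₂ θ₁) (nhds 0) (nhds (0 * dKL A θ₂ θ₁)) :=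
        (continuous_id.mul continuous_const).tendsto 0
      simpa using this.mono_left nhdsWithin_le_nhds
    refine tendsto_of_tendsto_of_tendsto_of_le_of_le' tendsto_const_nhds htop ?_ ?_
    · filter_upwards [self_mem_nhdsWithin] using hlo
    · filter_upwards [self_mem_nhdsWithin] using hup
  · exact (Cfun_continuousAt hA hconv hβ hpos).continuousWithinAt

end cfun2

lemma aux_max (k : ℕ) (hk : 2 ≤ k) (Istar : Fin k) (f : Fin k → ℝ → ℝ) (M : Fin k → ℝ)
    (β : ℝ) (hβ0 : 0 < β) (hβ1 : β < 1)
    (hM : ∀ i, 0 ≤ M i)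
    (hzero : ∀ i, i ≠ Istar → f i 0 = 0)
    (hmono : ∀ i, i ≠ Istar → ∀ a b : ℝ, 0 ≤ a → a < b → f i a < f i b)
    (hdiff : ∀ i, i ≠ Istar → ∀ a b : ℝ, 0 < a → a ≤ b →
      a * f i b ≤ a * f i a + (b - a) * M i)
    (hcont : ∀ i, i ≠ Istar → ContinuousOn (f i) (Set.Ici 0)) :
    ∃ ψs : Fin k → ℝ, ((∀ i, 0 ≤ ψs i) ∧ ψs Istar = β ∧ (∑ i, ψs i) = 1) ∧
      (∀ ψ : Fin k → ℝ, ((∀ i, 0 ≤ ψ i) ∧ ψ Istar = β ∧ (∑ i, ψ i) = 1) →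
        (⨅ i : {i : Fin k // i ≠ Istar}, f i.1 (ψ i.1)) ≤
          ⨅ i : {i : Fin k // i ≠ Istar}, f i.1 (ψs i.1)) ∧
      (∀ i : {i : Fin k // i ≠ Istar}, f i.1 (ψs i.1) =
        ⨅ i : {i : Fin k // i ≠ Istar}, f i.1 (ψs i.1)) := by
  classical
  haveI : Nontrivial (Fin k) := Fin.nontrivial_iff_two_le.mpr hk
  obtain ⟨j₀, hj₀⟩ := exists_ne Istar
  haveI hne' : Nonempty {i : Fin k // i ≠ Istar} := ⟨⟨j₀, hj₀⟩⟩
  have hmono' : ∀ i, i ≠ Istar → ∀ a b : ℝ, 0 ≤ a → a ≤ b → f i a ≤ f i b := by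
    intro i hi a b ha hab
    rcases eq_or_lt_of_le hab with rfl | h
    · exact le_rfl
    · exact (hmono i hi a b ha h).le
  have hnonneg : ∀ i, i ≠ Istar → ∀ ψ : ℝ, 0 ≤ ψ → 0 ≤ f i ψ := by
    intro i hi ψ hψ
    have := hmono' i hi 0 ψ le_rfl hψ
    rwa [hzero i hi] at this
  set G : (Fin k → ℝ) → ℝ := fun ψ => Finset.univ.inf' Finset.univ_nonempty
    (fun i : {i : Fin k // i ≠ Istar} => f i.1 (ψ i.1)) with hGdef
  have hFG : ∀ ψ : Fin k → ℝ,
      (⨅ i : {i : Fin k // i ≠ Istar}, f i.1 (ψ i.1)) = G ψ :=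
    fun ψ => (Finset.inf'_univ_eq_ciInf _).symm
  set K : Set (Fin k → ℝ) :=
    {ψ : Fin k → ℝ | (∀ i, 0 ≤ ψ i) ∧ ψ Istar = β ∧ (∑ i, ψ i) = 1} with hKdef
  have hKne : K.Nonempty := by
    refine ⟨fun i => (if i = Istar then β else 0) + (if i = j₀ then 1 - β else 0), ?_, ?_, ?_⟩
    · intro i
      have h1 : (0:ℝ) ≤ if i = Istar then β else 0 := by split <;> linarith
      have h2 : (0:ℝ) ≤ if i = j₀ then 1 - β else 0 := by split <;> linarith
      show (0:ℝ) ≤ (if i = Istar then β else 0) + (if i = j₀ then 1 - β else 0)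
      linarith
    · show (if Istar = Istar then β else 0) + (if Istar = j₀ then 1 - β else 0) = β
      rw [if_pos rfl, if_neg (Ne.symm hj₀)]
      ring
    · rw [Finset.sum_add_distrib]
      rw [Finset.sum_ite_eq' Finset.univ Istar (fun _ => β),
        Finset.sum_ite_eq' Finset.univ j₀ (fun _ => 1 - β)]
      simp
  have hKcomp : IsCompact K := by
    apply IsCompact.of_isClosed_subset (isCompact_Icc (a := (0 : Fin k → ℝ)) (b := 1))
    · have h1 : IsClosed {ψ : Fin k → ℝ | ∀ i, 0 ≤ ψ i} := by
        have he : {ψ : Fin k → ℝ | ∀ i, 0 ≤ ψ i} = ⋂ i, {ψ : Fin k → ℝ | 0 ≤ ψ i} := by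
          ext ψ; simp
        rw [he]
        exact isClosed_iInter fun i => isClosed_le continuous_const (continuous_apply i)
      have h2 : IsClosed {ψ : Fin k → ℝ | ψ Istar = β} :=
        isClosed_eq (continuous_apply Istar) continuous_const
      have h3 : IsClosed {ψ : Fin k → ℝ | (∑ i, ψ i) = 1} :=
        isClosed_eq (continuous_finset_sum _ fun i _ => continuous_apply i) continuous_const
      have hKe : K = {ψ : Fin k → ℝ | ∀ i, 0 ≤ ψ i} ∩
          ({ψ : Fin k → ℝ | ψ Istar = β} ∩ {ψ : Fin k → ℝ | (∑ i, ψ i) = 1}) := by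
        rw [hKdef, Set.setOf_and, Set.setOf_and]
      rw [hKe]
      exact h1.inter (h2.inter h3)
    · rintro ψ ⟨h1, h2, h3⟩
      constructor
      · intro i; exact h1 i
      · intro i
        calc ψ i ≤ ∑ l, ψ l := Finset.single_le_sum (fun l _ => h1 l) (Finset.mem_univ i)
        _ = 1 := h3
  have hGcont : ContinuousOn G K := by
    apply ContinuousOn.finset_inf'_apply
    intro i _
    have hcomp : ContinuousOn (fun ψ : Fin k → ℝ => ψ i.1) K :=
      (continuous_apply i.1).continuousOn
    refine (hcont i.1 i.2).comp hcomp ?_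
    intro ψ hψ
    exact Set.mem_Ici.2 (hψ.1 i.1)
  obtain ⟨ψs, hψsK, hmax⟩ := hKcomp.exists_isMaxOn hKne hGcont
  obtain ⟨hψs0, hψsI, hψssum⟩ := hψsK
  have hψsK' : ψs ∈ K := ⟨hψs0, hψsI, hψssum⟩
  have hG_le : ∀ (ψ : Fin k → ℝ) (i : {i : Fin k // i ≠ Istar}),
      G ψ ≤ f i.1 (ψ i.1) :=
    fun ψ i => Finset.inf'_le _ (Finset.mem_univ i)
  have hG_lt : ∀ (ψ : Fin k → ℝ) (c : ℝ),
      (∀ i : {i : Fin k // i ≠ Istar}, c < f i.1 (ψ i.1)) → c < G ψ := by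
    intro ψ c h
    rw [hGdef]
    rw [Finset.lt_inf'_iff]
    intro i _
    exact h i
  have hG_ge : ∀ (ψ : Fin k → ℝ) (c : ℝ),
      (∀ i : {i : Fin k // i ≠ Istar}, c ≤ f i.1 (ψ i.1)) → c ≤ G ψ := by
    intro ψ c h
    rw [hGdef]
    exact Finset.le_inf' _ _ (fun i _ => h i)
  have hG_attain : ∀ ψ : Fin k → ℝ,
      ∃ i : {i : Fin k // i ≠ Istar}, G ψ = f i.1 (ψ i.1) := by
    intro ψ
    obtain ⟨i₀, -, h⟩ := Finset.exists_mem_eq_inf'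
      (Finset.univ_nonempty (α := {i : Fin k // i ≠ Istar}))
      (fun i : {i : Fin k // i ≠ Istar} => f i.1 (ψ i.1))
    exact ⟨i₀, by rw [hGdef]; exact h⟩
  clear_value G
  set m := G ψs with hmdef
  have hm0 : 0 ≤ m := by
    rw [hmdef]
    exact hG_ge ψs 0 (fun i => hnonneg i.1 i.2 _ (hψs0 i.1))
  clear_value m
  have heq : ∀ i : {i : Fin k // i ≠ Istar}, f i.1 (ψs i.1) = m := by
    by_contra hcon
    push_neg at hcon
    obtain ⟨j, hj⟩ := hcon
    have hjm : m < f j.1 (ψs j.1) := by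
      rw [hmdef]
      exact lt_of_le_of_ne (hG_le ψs j) (by rw [← hmdef]; exact Ne.symm hj)
    set T : Finset {i : Fin k // i ≠ Istar} :=
      Finset.univ.filter (fun i => f i.1 (ψs i.1) = m) with hTdef
    have hTne : T.Nonempty := by
      obtain ⟨i₀, hi₀⟩ := hG_attain ψs
      refine ⟨i₀, Finset.mem_filter.2 ⟨Finset.mem_univ _, ?_⟩⟩
      exact (hmdef.trans hi₀).symm
    have hTmem : ∀ i : {i : Fin k // i ≠ Istar}, i ∈ T ↔ f i.1 (ψs i.1) = m := by
      intro i
      rw [hTdef, Finset.mem_filter]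
      simp
    have hjT : j ∉ T := fun h => hj (hTmem j |>.1 h)
    set Nr : ℝ := (T.card : ℝ) with hNrdef
    have hNr : 0 < Nr := by
      rw [hNrdef]
      exact_mod_cast Finset.card_pos.2 hTne
    clear_value Nr
    have hψsj : 0 < ψs j.1 := by
      rcases eq_or_lt_of_le (hψs0 j.1) with h | h
      · exfalso
        rw [← h, hzero j.1 j.2] at hjm
        linarith
      · exact h
    set gap := f j.1 (ψs j.1) - m with hgapdef
    have hgap : 0 < gap := by rw [hgapdef]; linarith
    clear_value gap
    have hMj0 : 0 ≤ M j.1 := hM j.1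
    set δ := min (ψs j.1 / (2 * Nr)) (gap * ψs j.1 / (2 * Nr * (M j.1 + 1))) with hδdef
    have h2Nr : (0:ℝ) < 2 * Nr := by linarith
    have hM1 : (0:ℝ) < M j.1 + 1 := by linarith
    have hδ : 0 < δ :=
      lt_min (div_pos hψsj h2Nr) (div_pos (mul_pos hgap hψsj) (mul_pos h2Nr hM1))
    have hNrδ : Nr * δ ≤ ψs j.1 / 2 := by
      have h1 := mul_le_mul_of_nonneg_left (min_le_left (ψs j.1 / (2 * Nr))
        (gap * ψs j.1 / (2 * Nr * (M j.1 + 1)))) hNr.le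
      have h2 : Nr * (ψs j.1 / (2 * Nr)) = ψs j.1 / 2 := by
        rw [mul_comm 2 Nr, ← mul_div_assoc, mul_div_mul_left (ψs j.1) 2 hNr.ne']
      rw [hδdef]; linarith [h1.trans_eq h2]
    have hδgap : Nr * δ * (M j.1 + 1) ≤ gap * ψs j.1 / 2 := by
      have hpos : (0:ℝ) < Nr * (M j.1 + 1) := mul_pos hNr hM1
      have h1 := mul_le_mul_of_nonneg_left (min_le_right (ψs j.1 / (2 * Nr))
        (gap * ψs j.1 / (2 * Nr * (M j.1 + 1)))) hpos.le
      have h2 : Nr * (M j.1 + 1) * (gap * ψs j.1 / (2 * Nr * (M j.1 + 1))) =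
          gap * ψs j.1 / 2 := by
        rw [show 2 * Nr * (M j.1 + 1) = (Nr * (M j.1 + 1)) * 2 by ring, ← mul_div_assoc,
          mul_div_mul_left _ 2 hpos.ne']
      rw [hδdef]; linarith [h1.trans_eq h2]
    clear_value δ
    set Tk : Finset (Fin k) := T.image Subtype.val with hTkdef
    have hmemTk : ∀ i : {i : Fin k // i ≠ Istar}, i.1 ∈ Tk ↔ i ∈ T := by
      intro i
      rw [hTkdef]
      constructor
      · intro h
        obtain ⟨a, haT, ha⟩ := Finset.mem_image.1 h
        rwa [show a = i from Subtype.ext ha] at haT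
      · exact Finset.mem_image_of_mem _
    have hIstarTk : Istar ∉ Tk := by
      rw [hTkdef]
      intro h
      obtain ⟨a, -, ha⟩ := Finset.mem_image.1 h
      exact a.2 ha
    have hjTk : j.1 ∉ Tk := fun h => hjT ((hmemTk j).1 h)
    have hcard : Tk.card = T.card := Finset.card_image_of_injective T Subtype.val_injective
    clear_value Tk
    set ψ' : Fin k → ℝ :=
      fun i => ψs i + (if i ∈ Tk then δ else 0) - (if i = j.1 then Nr * δ else 0) with hψ'def
    have hvalj : ψ' j.1 = ψs j.1 - Nr * δ := by
      show ψs j.1 + (if j.1 ∈ Tk then δ else 0) - (if j.1 = j.1 then Nr * δ else 0) = _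
      rw [if_neg hjTk, if_pos rfl]
      ring
    have hvalT : ∀ i : Fin k, i ∈ Tk → ψ' i = ψs i + δ := by
      intro i hi
      have hij : i ≠ j.1 := fun h => hjTk (h ▸ hi)
      show ψs i + (if i ∈ Tk then δ else 0) - (if i = j.1 then Nr * δ else 0) = _
      rw [if_pos hi, if_neg hij]
      ring
    have hvalo : ∀ i : Fin k, i ∉ Tk → i ≠ j.1 → ψ' i = ψs i := by
      intro i hi hij
      show ψs i + (if i ∈ Tk then δ else 0) - (if i = j.1 then Nr * δ else 0) = _
      rw [if_neg hi, if_neg hij]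
      ring
    have hψ'K : ψ' ∈ K := by
      refine ⟨?_, ?_, ?_⟩
      · intro i
        by_cases hij : i = j.1
        · subst hij
          rw [hvalj]
          linarith
        · by_cases hiTk : i ∈ Tk
          · rw [hvalT i hiTk]
            linarith [hψs0 i, hδ.le]
          · rw [hvalo i hiTk hij]
            exact hψs0 i
      · have hIj : Istar ≠ j.1 := Ne.symm j.2
        rw [hvalo Istar hIstarTk hIj]
        exact hψsI
      · show (∑ i, (ψs i + (if i ∈ Tk then δ else 0) - (if i = j.1 then Nr * δ else 0))) = 1
        rw [Finset.sum_sub_distrib, Finset.sum_add_distrib]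
        rw [Finset.sum_ite_mem Finset.univ Tk (fun _ => δ), Finset.univ_inter,
          Finset.sum_const, Finset.sum_ite_eq' Finset.univ j.1 (fun _ => Nr * δ)]
        rw [hcard]
        simp only [Finset.mem_univ, if_pos, nsmul_eq_mul]
        rw [hψssum, ← hNrdef]
        ring
    clear_value ψ'
    have hlt : m < G ψ' := by
      apply hG_lt
      intro i
      by_cases hiT : i ∈ T
      · rw [hvalT i.1 ((hmemTk i).2 hiT)]
        have hfi : f i.1 (ψs i.1) = m := (hTmem i).1 hiT
        calc m = f i.1 (ψs i.1) := hfi.symm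
        _ < f i.1 (ψs i.1 + δ) := hmono i.1 i.2 _ _ (hψs0 i.1) (by linarith)
      · by_cases hij : i = j
        · subst hij
          rw [hvalj]
          have ha' : 0 < ψs i.1 - Nr * δ := by linarith only [hNrδ, hψsj]
          have hab : ψs i.1 - Nr * δ ≤ ψs i.1 := by
            linarith only [mul_pos hNr hδ]
          have hdl := hdiff i.1 i.2 (ψs i.1 - Nr * δ) (ψs i.1) ha' hab
          have hX : (ψs i.1 - Nr * δ) * (f i.1 (ψs i.1) - f i.1 (ψs i.1 - Nr * δ)) ≤
              Nr * δ * M i.1 := by linarith only [hdl]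
          have hlt2 : Nr * δ * M i.1 < (ψs i.1 - Nr * δ) * gap := by
            have h1 : Nr * δ * M i.1 < Nr * δ * (M i.1 + 1) := by
              linarith only [mul_pos hNr hδ]
            have h2 : gap * ψs i.1 / 2 ≤ (ψs i.1 - Nr * δ) * gap := by
              nlinarith [hNrδ, hgap]
            linarith only [h1, h2, hδgap]
          have hfin : f i.1 (ψs i.1) - f i.1 (ψs i.1 - Nr * δ) < gap := by
            nlinarith [hX, hlt2, ha']
          rw [hgapdef] at hfin
          linarith only [hfin]
        · have hiTk : i.1 ∉ Tk := fun h => hiT ((hmemTk i).1 h)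
          have hij1 : i.1 ≠ j.1 := fun h => hij (Subtype.ext h)
          rw [hvalo i.1 hiTk hij1]
          rw [hmdef]
          refine lt_of_le_of_ne (hG_le ψs i) ?_
          rw [← hmdef]
          intro h
          exact hiT ((hTmem i).2 h.symm)
    have hcontr := hmax hψ'K
    rw [← hmdef] at hcontr
    exact absurd (lt_of_lt_of_le hlt hcontr) (lt_irrefl m)
  refine ⟨ψs, hψsK', ?_, ?_⟩
  · intro ψ hψ
    rw [hFG ψ, hFG ψs]
    exact hmax hψ
  · intro i
    rw [hFG ψs, ← hmdef]
    exact heq i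

/-- For every `β ∈ (0,1)`: (i) there is a unique nonnegative `ψ*` with
`ψ*_{I*} = β`, `Σ ψ*_i = 1` and `C_i(β, ψ*_i) = C_j(β, ψ*_j)` for all `i, j ≠ I*`;
(ii) this `ψ*` is the unique maximizer of `min_{i ≠ I*} C_i(β, ψ_i)` over the
constraint set, and the optimal value is `Γ*_β`. -/
theorem stmt_6 (A : ℝ → ℝ) (hA : Differentiable ℝ A)
    (hconv : StrictConvexOn ℝ (Set.univ : Set ℝ) A)
    (lo hi : ℝ) (hlh : lo < hi) (k : ℕ) (hk : 2 ≤ k)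
    (θs : Fin k → ℝ) (hθs : ∀ j, θs j ∈ Set.Ioo lo hi)
    (Istar : Fin k) (hIstar : ∀ j, j ≠ Istar → θs j < θs Istar)
    (β : ℝ) (hβ : β ∈ Set.Ioo (0:ℝ) 1) :
    ∃ ψstar : Fin k → ℝ,
      ((∀ i, 0 ≤ ψstar i) ∧ ψstar Istar = β ∧ (∑ i, ψstar i) = 1 ∧
        (∀ i j, i ≠ Istar → j ≠ Istar →
          Cfun A (θs Istar) (θs i) β (ψstar i) = Cfun A (θs Istar) (θs j) β (ψstar j))) ∧
      (∀ ψ : Fin k → ℝ, (∀ i, 0 ≤ ψ i) → ψ Istar = β → (∑ i, ψ i) = 1 →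
        (∀ i j, i ≠ Istar → j ≠ Istar →
          Cfun A (θs Istar) (θs i) β (ψ i) = Cfun A (θs Istar) (θs j) β (ψ j)) →
        ψ = ψstar) ∧
      (∀ ψ : Fin k → ℝ, (∀ i, 0 ≤ ψ i) → ψ Istar = β → (∑ i, ψ i) = 1 → ψ ≠ ψstar →
        (⨅ i : {i : Fin k // i ≠ Istar}, Cfun A (θs Istar) (θs i.1) β (ψ i.1)) <
          (⨅ i : {i : Fin k // i ≠ Istar}, Cfun A (θs Istar) (θs i.1) β (ψstar i.1))) ∧
      (⨅ i : {i : Fin k // i ≠ Istar}, Cfun A (θs Istar) (θs i.1) β (ψstar i.1)) =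
        Gamma A k θs Istar β := by
  classical
  obtain ⟨hβ0, hβ1⟩ := hβ
  haveI : Nontrivial (Fin k) := Fin.nontrivial_iff_two_le.mpr hk
  obtain ⟨j₀, hj₀⟩ := exists_ne Istar
  haveI hne' : Nonempty {i : Fin k // i ≠ Istar} := ⟨⟨j₀, hj₀⟩⟩
  obtain ⟨ψs, hψsK, hmax, heq⟩ := aux_max k hk Istar
    (fun i ψ => Cfun A (θs Istar) (θs i) β ψ)
    (fun i => β * dKL A (θs Istar) (θs i)) β hβ0 hβ1
    (fun i => mul_nonneg hβ0.le (dKL_nonneg hA hconv _ _))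
    (fun i _ => Cfun_zero hA hconv hβ0.le)
    (fun i hi a b ha hab => Cfun_strictMono hA hconv hβ0 (hIstar i hi) ha hab)
    (fun i _ a b ha hab => Cfun_diff_le hA hconv hβ0.le ha hab)
    (fun i _ => Cfun_continuousOn hA hconv hβ0.le)
  obtain ⟨hψs0, hψsI, hψssum⟩ := hψsK
  set m := ⨅ i : {i : Fin k // i ≠ Istar}, Cfun A (θs Istar) (θs i.1) β (ψs i.1) with hmdef
  have heq' : ∀ i, ∀ hi : i ≠ Istar, Cfun A (θs Istar) (θs i) β (ψs i) = m :=
    fun i hi => heq ⟨i, hi⟩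
  have hesum : ∀ ψ : Fin k → ℝ, ψ Istar = β → (∑ i, ψ i) = 1 →
      (∑ i ∈ Finset.univ.erase Istar, ψ i) = 1 - β := by
    intro ψ h1 h2
    have h3 := Finset.add_sum_erase Finset.univ ψ (Finset.mem_univ Istar)
    rw [h2, h1] at h3
    linarith
  have hj₀erase : j₀ ∈ Finset.univ.erase Istar := Finset.mem_erase.2 ⟨hj₀, Finset.mem_univ _⟩
  refine ⟨ψs, ⟨hψs0, hψsI, hψssum, ?_⟩, ?_, ?_, ?_⟩
  · intro i j hi hj
    exact (heq' i hi).trans (heq' j hj).symm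
  · -- uniqueness of the equalizer
    intro ψ hψ0 hψI hψsum hpair
    have hc : ∀ i, i ≠ Istar →
        Cfun A (θs Istar) (θs i) β (ψ i) = Cfun A (θs Istar) (θs j₀) β (ψ j₀) :=
      fun i hi => hpair i j₀ hi hj₀
    rcases lt_trichotomy (Cfun A (θs Istar) (θs j₀) β (ψ j₀)) m with hcm | hcm | hcm
    · exfalso
      have hlt : ∀ i ∈ Finset.univ.erase Istar, ψ i < ψs i := by
        intro i hi
        have hi' := (Finset.mem_erase.1 hi).1
        by_contra hcontra
        push_neg at hcontra
        have hle := Cfun_mono hA hconv (θ₁ := θs Istar) (θ₂ := θs i) hβ0.le (hψs0 i) hcontra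
        rw [heq' i hi', hc i hi'] at hle
        linarith
      have hsum := Finset.sum_lt_sum_of_nonempty ⟨j₀, hj₀erase⟩ hlt
      rw [hesum ψ hψI hψsum, hesum ψs hψsI hψssum] at hsum
      linarith
    · funext i
      by_cases hi : i = Istar
      · subst hi; rw [hψI, hψsI]
      · have h1 := hc i hi
        have h2 := heq' i hi
        rcases lt_trichotomy (ψ i) (ψs i) with h | h | h
        · exfalso
          have hl := Cfun_strictMono hA hconv hβ0 (hIstar i hi) (hψ0 i) h
          rw [h1, h2, hcm] at hl
          exact lt_irrefl m hl
        · exact h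
        · exfalso
          have hl := Cfun_strictMono hA hconv hβ0 (hIstar i hi) (hψs0 i) h
          rw [h1, h2, hcm] at hl
          exact lt_irrefl m hl
    · exfalso
      have hlt : ∀ i ∈ Finset.univ.erase Istar, ψs i < ψ i := by
        intro i hi
        have hi' := (Finset.mem_erase.1 hi).1
        by_contra hcontra
        push_neg at hcontra
        have hle := Cfun_mono hA hconv (θ₁ := θs Istar) (θ₂ := θs i) hβ0.le (hψ0 i) hcontra
        rw [heq' i hi', hc i hi'] at hle
        linarith
      have hsum := Finset.sum_lt_sum_of_nonempty ⟨j₀, hj₀erase⟩ hlt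
      rw [hesum ψ hψI hψsum, hesum ψs hψsI hψssum] at hsum
      linarith
  · -- strict suboptimality
    intro ψ hψ0 hψI hψsum hne
    have hex : ∃ i, i ≠ Istar ∧ ψ i < ψs i := by
      by_contra hcontra
      push_neg at hcontra
      obtain ⟨i₁, hi₁⟩ := Function.ne_iff.1 hne
      have hi₁I : i₁ ≠ Istar := by
        intro h; subst h; rw [hψI, hψsI] at hi₁; exact hi₁ rfl
      have hlt : ψs i₁ < ψ i₁ := lt_of_le_of_ne (hcontra i₁ hi₁I) (Ne.symm hi₁)
      have hle : ∀ i ∈ Finset.univ.erase Istar, ψs i ≤ ψ i := fun i hi =>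
        hcontra i (Finset.mem_erase.1 hi).1
      have hsum := Finset.sum_lt_sum hle ⟨i₁, Finset.mem_erase.2 ⟨hi₁I, Finset.mem_univ _⟩, hlt⟩
      rw [hesum ψ hψI hψsum, hesum ψs hψsI hψssum] at hsum
      linarith
    obtain ⟨i, hi, hilt⟩ := hex
    calc (⨅ l : {l : Fin k // l ≠ Istar}, Cfun A (θs Istar) (θs l.1) β (ψ l.1))
        ≤ Cfun A (θs Istar) (θs i) β (ψ i) :=
          ciInf_le (Set.Finite.bddBelow (Set.finite_range _)) (⟨i, hi⟩ : {l : Fin k // l ≠ Istar})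
      _ < Cfun A (θs Istar) (θs i) β (ψs i) :=
          Cfun_strictMono hA hconv hβ0 (hIstar i hi) (hψ0 i) hilt
      _ = m := heq' i hi
  · -- value equals Gamma
    have hGamma : Gamma A k θs Istar β = sSup ((fun ψ : Fin k → ℝ =>
        ⨅ i : {i : Fin k // i ≠ Istar}, Cfun A (θs Istar) (θs i.1) β (ψ i.1)) ''
        {ψ : Fin k → ℝ | (∀ i, 0 ≤ ψ i) ∧ ψ Istar = β ∧ (∑ i, ψ i) = 1}) := rfl
    have hgreat : IsGreatest ((fun ψ : Fin k → ℝ =>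
        ⨅ i : {i : Fin k // i ≠ Istar}, Cfun A (θs Istar) (θs i.1) β (ψ i.1)) ''
        {ψ : Fin k → ℝ | (∀ i, 0 ≤ ψ i) ∧ ψ Istar = β ∧ (∑ i, ψ i) = 1}) m := by
      constructor
      · exact ⟨ψs, ⟨hψs0, hψsI, hψssum⟩, hmdef.symm⟩
      · rintro y ⟨ψ, hψ, rfl⟩
        exact (hmax ψ hψ).trans_eq hmdef.symm
    rw [← hmdef, hGamma]
    exact hgreat.csSup_eq.symm
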